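/- For any matrix A ∈ R^{n×d} and any integer k ≥ 1 with k ≤ rank considerations, the sum over all columns i of the rank-k ridge leverage scores τ_i^k(A) = a_i^T (AA^T + (‖A − A_k‖_F^2 / k) I)^+ a_i is at most 2k. -/

import Mathlib

open Matrix

/-- Squared Frobenius norm of a matrix. -/
noncomputable def frobSq {n m : ℕ} (A : Matrix (Fin n) (Fin m) ℝ) : ℝ :=
  ∑ i, ∑ j, (A i j) ^ 2

/-- `P` is the Moore–Penrose pseudoinverse of `M` (the four Penrose conditions). -/
def IsMoorePenrose {n : ℕ} (M P : Matrix (Fin n) (Fin n) ℝ) : Prop :=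
  M * P * M = M ∧ P * M * P = P ∧ (M * P)ᵀ = M * P ∧ (P * M)ᵀ = P * M

private lemma frobSq_eq_trace {a b : ℕ} (X : Matrix (Fin a) (Fin b) ℝ) :
    frobSq X = Matrix.trace (Xᵀ * X) := by
  unfold frobSq
  simp only [Matrix.trace, Matrix.diag_apply, Matrix.mul_apply, Matrix.transpose_apply, sq]
  exact Finset.sum_comm

private lemma trace_tmul_nonneg {a b : ℕ} (X : Matrix (Fin a) (Fin b) ℝ) :
    0 ≤ Matrix.trace (Xᵀ * X) := by
  rw [← frobSq_eq_trace]; unfold frobSq; positivity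

private lemma trace_conj_nonneg {n d : ℕ} (R : Matrix (Fin n) (Fin n) ℝ)
    (hsym : Rᵀ = R) (hid : R * R = R) (X : Matrix (Fin n) (Fin d) ℝ) :
    0 ≤ Matrix.trace (Xᵀ * (R * X)) := by
  have h : Xᵀ * (R * X) = (R * X)ᵀ * (R * X) := by
    rw [Matrix.transpose_mul, hsym, Matrix.mul_assoc, ← Matrix.mul_assoc R R X, hid]
  rw [h]; exact trace_tmul_nonneg _

private lemma trace_symm_proj {n d : ℕ} (R : Matrix (Fin n) (Fin n) ℝ)
    (hsym : Rᵀ = R) (hid : R * R = R) (X Y : Matrix (Fin n) (Fin d) ℝ)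
    (hXY : R * X = R * Y) :
    Matrix.trace (Xᵀ * (R * X)) = Matrix.trace (Yᵀ * (R * Y)) := by
  have h : ∀ Z : Matrix (Fin n) (Fin d) ℝ, Zᵀ * (R * Z) = (R * Z)ᵀ * (R * Z) := fun Z => by
    rw [Matrix.transpose_mul, hsym, Matrix.mul_assoc, ← Matrix.mul_assoc R R Z, hid]
  rw [h X, h Y, hXY]

private lemma exists_top {n : ℕ} (μ : Fin n → ℝ) :
    ∀ k, k ≤ n → ∃ S : Finset (Fin n), S.card = k ∧ ∀ i ∈ S, ∀ j, j ∉ S → μ j ≤ μ i := by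
  intro k
  induction k with
  | zero => intro _; exact ⟨∅, rfl, by simp⟩
  | succ k ih =>
    intro hk
    obtain ⟨S, hcard, htop⟩ := ih (Nat.le_of_succ_le hk)
    have hne : Sᶜ.Nonempty := by
      rw [← Finset.card_pos, Finset.card_compl, hcard, Fintype.card_fin]; omega
    obtain ⟨j0, hj0, hmax⟩ := Finset.exists_max_image Sᶜ μ hne
    have hj0S : j0 ∉ S := Finset.mem_compl.mp hj0
    refine ⟨insert j0 S, ?_, ?_⟩
    · rw [Finset.card_insert_of_notMem hj0S, hcard]
    · intro i hi j hj
      have hjS : j ∉ S := fun h => hj (Finset.mem_insert_of_mem h)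
      rcases Finset.mem_insert.mp hi with rfl | hiS
      · exact hmax j (Finset.mem_compl.mpr hjS)
      · exact htop i hiS j hjS

private lemma sum_mul_le_top {n k : ℕ} (μ c : Fin n → ℝ) (S : Finset (Fin n))
    (hScard : S.card = k) (hk : 1 ≤ k)
    (htop : ∀ i ∈ S, ∀ j, j ∉ S → μ j ≤ μ i)
    (hμ : ∀ j, 0 ≤ μ j) (hc0 : ∀ j, 0 ≤ c j) (hc1 : ∀ j, c j ≤ 1)
    (hcsum : ∑ j, c j ≤ (k : ℝ)) :
    ∑ j, μ j * c j ≤ ∑ j ∈ S, μ j := by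
  have hSne : S.Nonempty := Finset.card_pos.mp (by omega)
  obtain ⟨i0, hi0, hmin⟩ := Finset.exists_min_image S μ hSne
  have hsplitc : ∑ j ∈ S, c j + ∑ j ∈ Sᶜ, c j = ∑ j, c j := Finset.sum_add_sum_compl S c
  have h1 : ∑ j ∈ Sᶜ, μ j * c j ≤ μ i0 * ∑ j ∈ Sᶜ, c j := by
    rw [Finset.mul_sum]
    refine Finset.sum_le_sum fun j hj => ?_
    exact mul_le_mul_of_nonneg_right (htop i0 hi0 j (Finset.mem_compl.mp hj)) (hc0 j)
  have h2 : μ i0 * ∑ j ∈ Sᶜ, c j ≤ μ i0 * ∑ j ∈ S, (1 - c j) := by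
    refine mul_le_mul_of_nonneg_left ?_ (hμ i0)
    have h : ∑ j ∈ S, (1 - c j) = (k : ℝ) - ∑ j ∈ S, c j := by
      rw [Finset.sum_sub_distrib, Finset.sum_const, hScard, nsmul_eq_mul, mul_one]
    rw [h]; linarith
  have h3 : μ i0 * ∑ j ∈ S, (1 - c j) ≤ ∑ j ∈ S, μ j * (1 - c j) := by
    rw [Finset.mul_sum]
    refine Finset.sum_le_sum fun j hj => ?_
    exact mul_le_mul_of_nonneg_right (hmin j hj) (by linarith [hc1 j])
  have hsplit : ∑ j, μ j * c j = ∑ j ∈ S, μ j * c j + ∑ j ∈ Sᶜ, μ j * c j :=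
    (Finset.sum_add_sum_compl S _).symm
  have hfin : ∑ j ∈ S, μ j * c j + ∑ j ∈ S, μ j * (1 - c j) = ∑ j ∈ S, μ j := by
    rw [← Finset.sum_add_distrib]
    exact Finset.sum_congr rfl fun j _ => by ring
  linarith

private lemma exists_proj {n d : ℕ} (Ak : Matrix (Fin n) (Fin d) ℝ) :
    ∃ (m : ℕ) (C : Matrix (Fin n) (Fin m) ℝ),
      m = Ak.rank ∧ Cᵀ * C = 1 ∧ C * Cᵀ * Ak = Ak := by
  classical
  set e := (WithLp.linearEquiv 2 ℝ (Fin n → ℝ)).symm with he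
  set V : Submodule ℝ (EuclideanSpace ℝ (Fin n)) :=
    (Submodule.span ℝ (Set.range Akᵀ)).map
      (e : (Fin n → ℝ) →ₗ[ℝ] EuclideanSpace ℝ (Fin n)) with hV
  have hfin : Module.finrank ℝ V = Ak.rank := by
    rw [hV, LinearEquiv.finrank_map_eq, Matrix.rank_eq_finrank_span_cols]; rfl
  set m := Module.finrank ℝ V with hm
  let b := stdOrthonormalBasis ℝ V
  set C : Matrix (Fin n) (Fin m) ℝ :=
    Matrix.of (fun j t => ((b t : EuclideanSpace ℝ (Fin n)) j)) with hC
  have hinner : ∀ (x : V) (t : Fin m),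
      (inner ℝ (b t) x : ℝ) =
        ∑ l, ((b t : EuclideanSpace ℝ (Fin n)) l) * ((x : EuclideanSpace ℝ (Fin n)) l) := by
    intro x t
    rw [Submodule.coe_inner]
    simp [PiLp.inner_apply, RCLike.inner_apply, conj_trivial]
    exact Finset.sum_congr rfl fun _ _ => mul_comm _ _
  refine ⟨m, C, hfin, ?_, ?_⟩
  · ext t s
    have h := orthonormal_iff_ite.mp b.orthonormal t s
    rw [Submodule.coe_inner] at h
    simp only [PiLp.inner_apply, RCLike.inner_apply, conj_trivial] at h
    simp only [Matrix.mul_apply, Matrix.transpose_apply, hC, Matrix.of_apply, Matrix.one_apply]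
    exact (Finset.sum_congr rfl fun _ _ => mul_comm _ _).trans h
  · ext j i
    have hcol : e (Akᵀ i) ∈ V :=
      Submodule.mem_map_of_mem (Submodule.subset_span (Set.mem_range_self i))
    set x : V := ⟨e (Akᵀ i), hcol⟩ with hx
    have hrepr := b.sum_repr' x
    have happ := congrArg (fun y : V => ((LinearMap.proj (R := ℝ) (φ := fun _ : Fin n => ℝ) j).comp
        ((WithLp.linearEquiv 2 ℝ (Fin n → ℝ)).toLinearMap.comp V.subtype)) y) hrepr
    simp only [map_sum, LinearMap.map_smul] at happ
    have hterm : ∀ t, ((LinearMap.proj (R := ℝ) (φ := fun _ : Fin n => ℝ) j).comp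
        ((WithLp.linearEquiv 2 ℝ (Fin n → ℝ)).toLinearMap.comp V.subtype)) (b t)
        = (b t : EuclideanSpace ℝ (Fin n)) j := fun t => rfl
    have hxj : ((LinearMap.proj (R := ℝ) (φ := fun _ : Fin n => ℝ) j).comp
        ((WithLp.linearEquiv 2 ℝ (Fin n → ℝ)).toLinearMap.comp V.subtype)) x = Ak j i := rfl
    rw [hxj] at happ
    simp only [hterm, smul_eq_mul] at happ
    rw [Matrix.mul_apply]
    calc ∑ l, (C * Cᵀ) j l * Ak l i
        = ∑ l, ∑ t, C j t * C l t * Ak l i := by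
          refine Finset.sum_congr rfl fun l _ => ?_
          rw [Matrix.mul_apply, Finset.sum_mul]
          rfl
      _ = ∑ t, ∑ l, C j t * C l t * Ak l i := Finset.sum_comm
      _ = ∑ t, (inner ℝ (b t) x : ℝ) * (b t : EuclideanSpace ℝ (Fin n)) j := by
          refine Finset.sum_congr rfl fun t _ => ?_
          rw [hinner x t, Finset.sum_mul]
          refine Finset.sum_congr rfl fun l _ => ?_
          have hxl : ((x : EuclideanSpace ℝ (Fin n)) l) = Ak l i := rfl
          rw [hxl]
          simp only [hC, Matrix.of_apply]
          ring
      _ = Ak j i := happ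

private lemma sum_dot_eq_trace {n d : ℕ} (A : Matrix (Fin n) (Fin d) ℝ)
    (P : Matrix (Fin n) (Fin n) ℝ) :
    ∑ i : Fin d, (Aᵀ i) ⬝ᵥ (P *ᵥ (Aᵀ i)) = Matrix.trace (P * (A * Aᵀ)) := by
  simp only [dotProduct, mulVec, Matrix.trace, Matrix.diag_apply, Matrix.mul_apply,
    Matrix.transpose_apply, Finset.mul_sum, Finset.sum_mul]
  rw [Finset.sum_comm]
  refine Finset.sum_congr rfl fun j _ => ?_
  rw [Finset.sum_comm]
  refine Finset.sum_congr rfl fun l _ => Finset.sum_congr rfl fun i _ => by ring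

/-- The sum of the rank-`k` ridge leverage scores
`τ_i^k(A) = aᵢᵀ (AAᵀ + (‖A-A_k‖_F²/k) I)⁺ aᵢ` is at most `2k`. -/
theorem sum_ridge_leverage_scores_le {n d k : ℕ} (hk : 1 ≤ k)
    (A Ak : Matrix (Fin n) (Fin d) ℝ)
    (hAkrank : Ak.rank ≤ k)
    (hAkbest : ∀ B : Matrix (Fin n) (Fin d) ℝ, B.rank ≤ k →
      frobSq (A - Ak) ≤ frobSq (A - B))
    (P : Matrix (Fin n) (Fin n) ℝ)
    (hP : IsMoorePenrose
      (A * Aᵀ + (frobSq (A - Ak) / (k : ℝ)) • (1 : Matrix (Fin n) (Fin n) ℝ)) P) :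
    ∑ i : Fin d, (Aᵀ i) ⬝ᵥ (P *ᵥ (Aᵀ i)) ≤ 2 * (k : ℝ) := by
  classical
  obtain ⟨m, C, hmrank, hCtC, hCCA⟩ := exists_proj Ak
  have hmk : m ≤ k := hmrank ▸ hAkrank
  have hk0 : (0:ℝ) < k := by exact_mod_cast hk
  have hmkR : (m:ℝ) ≤ (k:ℝ) := by exact_mod_cast hmk
  have hQsym : (C * Cᵀ)ᵀ = C * Cᵀ := by
    rw [Matrix.transpose_mul, Matrix.transpose_transpose]
  have hQidem : (C * Cᵀ) * (C * Cᵀ) = C * Cᵀ := by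
    rw [Matrix.mul_assoc, ← Matrix.mul_assoc Cᵀ C Cᵀ, hCtC, Matrix.one_mul]
  rw [sum_dot_eq_trace]
  set lam : ℝ := frobSq (A - Ak) / (k:ℝ) with hlam
  set M : Matrix (Fin n) (Fin n) ℝ := A * Aᵀ + lam • 1 with hMdef
  obtain ⟨h1, h2, h3, h4⟩ := hP
  have hEnn : 0 ≤ frobSq (A - Ak) := by unfold frobSq; positivity
  rcases eq_or_lt_of_le hEnn with hE0 | hEpos
  · -- the ridge parameter is zero, so A = Ak has rank at most k
    have hf0 : frobSq (A - Ak) = 0 := hE0.symm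
    have hlam0 : lam = 0 := by rw [hlam, hf0, zero_div]
    have hM : M = A * Aᵀ := by rw [hMdef, hlam0, zero_smul, add_zero]
    have hAeq : A = Ak := by
      have hz := hf0
      unfold frobSq at hz
      have h : ∀ p q, (A - Ak) p q = 0 := by
        intro p q
        have hp : ∑ j, ((A - Ak) p j)^2 = 0 :=
          (Finset.sum_eq_zero_iff_of_nonneg
            (fun i _ => Finset.sum_nonneg fun j _ => sq_nonneg _)).mp hz p (Finset.mem_univ p)
        have hq := (Finset.sum_eq_zero_iff_of_nonneg
            (fun j _ => sq_nonneg _)).mp hp q (Finset.mem_univ q)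
        exact (pow_eq_zero_iff (by norm_num)).mp hq
      have hsub : A - Ak = 0 := by ext p q; simpa using h p q
      exact sub_eq_zero.mp hsub
    have hCCA' : C * Cᵀ * A = A := by rw [hAeq]; exact hCCA
    set W := P * M with hW
    have hWsym : Wᵀ = W := h4
    have hWW : W * W = W := by
      rw [hW, Matrix.mul_assoc, ← Matrix.mul_assoc M P M, h1]
    have hAAQ : A * Aᵀ = (A * Aᵀ) * (C * Cᵀ) := by
      have hT : Aᵀ = Aᵀ * (C * Cᵀ) := by
        have h := congrArg Matrix.transpose hCCA'
        rw [Matrix.transpose_mul, hQsym] at h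
        exact h.symm
      conv_lhs => rw [hT]
      rw [Matrix.mul_assoc]
    have hRsym : (1 - W)ᵀ = 1 - W := by
      rw [Matrix.transpose_sub, Matrix.transpose_one, hWsym]
    have hRidem : (1 - W) * (1 - W) = 1 - W := by
      have h : (1 - W) * (1 - W) = 1 - W - W + W * W := by noncomm_ring
      rw [h, hWW]; abel
    have e1 : Matrix.trace (P * (A * Aᵀ)) = Matrix.trace (Cᵀ * (W * C)) := by
      calc Matrix.trace (P * (A * Aᵀ))
          = Matrix.trace ((P * (A * Aᵀ) * C) * Cᵀ) := by
            rw [show P * (A*Aᵀ) * C * Cᵀ = P * ((A*Aᵀ) * (C*Cᵀ)) by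
              simp only [Matrix.mul_assoc], ← hAAQ]
        _ = Matrix.trace (Cᵀ * (P * (A * Aᵀ) * C)) := Matrix.trace_mul_comm _ _
        _ = Matrix.trace (Cᵀ * (W * C)) := by
            rw [hW, hM]
    have hsplitm : Cᵀ * (W * C) + Cᵀ * ((1 - W) * C) = (1 : Matrix (Fin m) (Fin m) ℝ) := by
      rw [← Matrix.mul_add, ← Matrix.add_mul]
      have h11 : W + (1 - W) = (1 : Matrix (Fin n) (Fin n) ℝ) := by abel
      rw [h11, Matrix.one_mul, hCtC]
    have e2 : Matrix.trace (Cᵀ * (W * C)) + Matrix.trace (Cᵀ * ((1 - W) * C)) = (m:ℝ) := by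
      rw [← Matrix.trace_add, hsplitm, Matrix.trace_one]
      simp
    have hpos := trace_conj_nonneg (1 - W) hRsym hRidem C
    rw [e1]
    linarith
  · -- positive ridge parameter
    have hlampos : 0 < lam := by rw [hlam]; exact div_pos hEpos hk0
    have hH : (A * Aᵀ).IsHermitian := by
      have h := Matrix.isHermitian_mul_conjTranspose_self A
      rwa [Matrix.conjTranspose_eq_transpose_of_trivial] at h
    have hPSD : (A * Aᵀ).PosSemidef := by
      have h := Matrix.posSemidef_self_mul_conjTranspose A
      rwa [Matrix.conjTranspose_eq_transpose_of_trivial] at h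
    set μ : Fin n → ℝ := hH.eigenvalues with hμ
    have hμnn : ∀ j, 0 ≤ μ j := fun j => hPSD.eigenvalues_nonneg j
    set U : Matrix (Fin n) (Fin n) ℝ := (hH.eigenvectorUnitary : Matrix (Fin n) (Fin n) ℝ) with hU
    have hU1 : Uᵀ * U = 1 := by
      have h := (Unitary.mem_iff.mp hH.eigenvectorUnitary.prop).1
      rwa [Matrix.star_eq_conjTranspose, Matrix.conjTranspose_eq_transpose_of_trivial] at h
    have hU2 : U * Uᵀ = 1 := by
      have h := (Unitary.mem_iff.mp hH.eigenvectorUnitary.prop).2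
      rwa [Matrix.star_eq_conjTranspose, Matrix.conjTranspose_eq_transpose_of_trivial] at h
    have hspec : A * Aᵀ = U * Matrix.diagonal μ * Uᵀ := by
      have h := hH.spectral_theorem
      rw [Unitary.conjStarAlgAut_apply, Matrix.star_eq_conjTranspose, Matrix.conjTranspose_eq_transpose_of_trivial] at h
      simpa using h
    have hdpos : ∀ j, 0 < μ j + lam := fun j => by have := hμnn j; linarith
    have hprod : ∀ (a b : Fin n → ℝ),
        (U * Matrix.diagonal a * Uᵀ) * (U * Matrix.diagonal b * Uᵀ)
          = U * Matrix.diagonal (fun j => a j * b j) * Uᵀ := by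
      intro a b
      have h : (U * Matrix.diagonal a * Uᵀ) * (U * Matrix.diagonal b * Uᵀ)
          = U * (Matrix.diagonal a * ((Uᵀ * U) * (Matrix.diagonal b * Uᵀ))) := by
        simp only [Matrix.mul_assoc]
      rw [h, hU1, Matrix.one_mul, ← Matrix.mul_assoc (Matrix.diagonal a) (Matrix.diagonal b) Uᵀ,
        Matrix.diagonal_mul_diagonal, ← Matrix.mul_assoc]
    have hone : lam • (1 : Matrix (Fin n) (Fin n) ℝ)
        = U * Matrix.diagonal (fun _ => lam) * Uᵀ := by
      rw [← Matrix.smul_one_eq_diagonal, Matrix.mul_smul, Matrix.mul_one, Matrix.smul_mul, hU2]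
    have hMspec : M = U * Matrix.diagonal (fun j => μ j + lam) * Uᵀ := by
      rw [hMdef, hspec, hone, ← Matrix.add_mul, ← Matrix.mul_add, Matrix.diagonal_add]
    set N := U * Matrix.diagonal (fun j => (μ j + lam)⁻¹) * Uᵀ with hN
    have hMN : M * N = 1 := by
      rw [hMspec, hN, hprod]
      have h : (fun j => (μ j + lam) * (μ j + lam)⁻¹) = fun _ => (1:ℝ) :=
        funext fun j => mul_inv_cancel₀ (ne_of_gt (hdpos j))
      rw [h, Matrix.diagonal_one, Matrix.mul_one, hU2]
    have hNM : N * M = 1 := by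
      rw [hMspec, hN, hprod]
      have h : (fun j => (μ j + lam)⁻¹ * (μ j + lam)) = fun _ => (1:ℝ) :=
        funext fun j => inv_mul_cancel₀ (ne_of_gt (hdpos j))
      rw [h, Matrix.diagonal_one, Matrix.mul_one, hU2]
    have hPN : P = N := by
      have h5 : (N * M) * P * (M * N) = N * (M * P * M) * N := by
        simp only [Matrix.mul_assoc]
      rw [hNM, hMN, Matrix.one_mul, Matrix.mul_one, h1, hNM, Matrix.one_mul] at h5
      exact h5
    have hPAAT : Matrix.trace (P * (A * Aᵀ)) = ∑ j, (μ j + lam)⁻¹ * μ j := by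
      rw [hPN, hN, hspec, hprod, Matrix.trace_mul_comm, ← Matrix.mul_assoc, hU1,
        Matrix.one_mul, Matrix.trace_diagonal]
    rw [hPAAT]
    have htrAA : Matrix.trace (A * Aᵀ) = ∑ j, μ j := by
      rw [hspec, Matrix.trace_mul_comm, ← Matrix.mul_assoc, hU1, Matrix.one_mul,
        Matrix.trace_diagonal]
    set Hm := Uᵀ * (C * Cᵀ) * U with hHm
    have hHmsym : Hmᵀ = Hm := by
      rw [hHm, Matrix.transpose_mul, Matrix.transpose_mul, hQsym, Matrix.transpose_transpose,
        ← Matrix.mul_assoc]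
    have hHmidem : Hm * Hm = Hm := by
      have h : (Uᵀ*(C*Cᵀ)*U)*(Uᵀ*(C*Cᵀ)*U) = Uᵀ*((C*Cᵀ)*((U*Uᵀ)*((C*Cᵀ)*U))) := by
        simp only [Matrix.mul_assoc]
      rw [hHm, h, hU2, Matrix.one_mul, ← Matrix.mul_assoc (C*Cᵀ) (C*Cᵀ) U, hQidem,
        ← Matrix.mul_assoc]
    have hsymE : ∀ p q, Hm p q = Hm q p := by
      intro p q
      conv_lhs => rw [← hHmsym]
      rfl
    have hdiag : ∀ j, Hm j j = ∑ l, (Hm j l)^2 := by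
      intro j
      conv_lhs => rw [← hHmidem]
      rw [Matrix.mul_apply]
      refine Finset.sum_congr rfl fun l _ => ?_
      rw [sq, hsymE l j]
    set c : Fin n → ℝ := fun j => Hm j j with hc
    have hc0 : ∀ j, 0 ≤ c j := by
      intro j
      simp only [hc]
      rw [hdiag j]
      positivity
    have hc1 : ∀ j, c j ≤ 1 := by
      intro j
      have hsq : (Hm j j)^2 ≤ Hm j j := by
        have h := Finset.single_le_sum (f := fun l => (Hm j l)^2)
          (fun l _ => sq_nonneg _) (Finset.mem_univ j)
        rw [← hdiag j] at h
        exact h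
      simp only [hc]
      nlinarith [hsq, sq_nonneg (Hm j j - 1)]
    have hcsum : ∑ j, c j = (m:ℝ) := by
      have h : ∑ j, c j = Matrix.trace Hm := by
        simp only [Matrix.trace, Matrix.diag_apply, hc]
      rw [h, hHm, Matrix.trace_mul_comm, ← Matrix.mul_assoc, hU2, Matrix.one_mul,
        Matrix.trace_mul_comm, hCtC, Matrix.trace_one]
      simp
    have htrQ : Matrix.trace ((C*Cᵀ) * (A*Aᵀ)) = ∑ j, μ j * c j := by
      rw [hspec]
      have e1 : (C*Cᵀ) * (U * Matrix.diagonal μ * Uᵀ)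
          = ((C*Cᵀ) * (U * Matrix.diagonal μ)) * Uᵀ := by
        simp only [Matrix.mul_assoc]
      have e2 : Uᵀ * ((C*Cᵀ) * (U * Matrix.diagonal μ)) = Hm * Matrix.diagonal μ := by
        rw [hHm]; simp only [Matrix.mul_assoc]
      rw [e1, Matrix.trace_mul_comm, e2]
      simp only [Matrix.trace, Matrix.diag_apply, Matrix.mul_diagonal, hc]
      exact Finset.sum_congr rfl fun j _ => mul_comm _ _
    have hRQsym : (1 - C*Cᵀ)ᵀ = 1 - C*Cᵀ := by
      rw [Matrix.transpose_sub, Matrix.transpose_one, hQsym]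
    have hRQidem : (1 - C*Cᵀ) * (1 - C*Cᵀ) = 1 - C*Cᵀ := by
      have h : (1 - C*Cᵀ) * (1 - C*Cᵀ) = 1 - C*Cᵀ - C*Cᵀ + (C*Cᵀ)*(C*Cᵀ) := by noncomm_ring
      rw [h, hQidem]; abel
    have hRD : (1 - C*Cᵀ) * (A - Ak) = (1 - C*Cᵀ) * A := by
      rw [Matrix.mul_sub]
      have h : (1 - C*Cᵀ) * Ak = 0 := by rw [Matrix.sub_mul, Matrix.one_mul, hCCA, sub_self]
      rw [h, sub_zero]
    have hEtr : frobSq (A - Ak) =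
        Matrix.trace ((A-Ak)ᵀ * ((1 - C*Cᵀ) * (A-Ak)))
          + Matrix.trace ((A-Ak)ᵀ * ((C*Cᵀ) * (A-Ak))) := by
      rw [← Matrix.trace_add, ← Matrix.mul_add, ← Matrix.add_mul]
      have h11 : (1 - C*Cᵀ) + C*Cᵀ = (1 : Matrix (Fin n) (Fin n) ℝ) := by abel
      rw [h11, Matrix.one_mul, ← frobSq_eq_trace]
    have hpos2 : 0 ≤ Matrix.trace ((A-Ak)ᵀ * ((C*Cᵀ) * (A-Ak))) :=
      trace_conj_nonneg _ hQsym hQidem _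
    have hswap : Matrix.trace ((A-Ak)ᵀ * ((1 - C*Cᵀ) * (A-Ak)))
        = Matrix.trace (Aᵀ * ((1 - C*Cᵀ) * A)) :=
      trace_symm_proj _ hRQsym hRQidem _ _ hRD
    have hAQA : Matrix.trace (Aᵀ * ((1 - C*Cᵀ) * A))
        = Matrix.trace (A*Aᵀ) - Matrix.trace ((C*Cᵀ) * (A*Aᵀ)) := by
      rw [Matrix.sub_mul, Matrix.one_mul, Matrix.mul_sub, Matrix.trace_sub]
      congr 1
      · exact Matrix.trace_mul_comm Aᵀ A
      · rw [Matrix.trace_mul_comm, Matrix.mul_assoc]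
    have hEY : ∑ j, μ j - ∑ j, μ j * c j ≤ frobSq (A - Ak) := by
      rw [← htrAA, ← htrQ]
      linarith [hEtr, hswap, hAQA, hpos2]
    have hterm1 : ∀ j, (μ j + lam)⁻¹ * μ j ≤ 1 := by
      intro j
      rw [← div_eq_inv_mul, div_le_one (hdpos j)]
      linarith [hμnn j]
    rcases le_or_gt n k with hnk | hkn
    · have h : ∑ j, (μ j + lam)⁻¹ * μ j ≤ (n:ℝ) := by
        calc ∑ j, (μ j + lam)⁻¹ * μ j ≤ ∑ _j : Fin n, (1:ℝ) :=
            Finset.sum_le_sum fun j _ => hterm1 j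
          _ = n := by simp
      have hnkR : (n:ℝ) ≤ k := by exact_mod_cast hnk
      linarith
    · obtain ⟨S, hScard, htop⟩ := exists_top μ k (le_of_lt hkn)
      have hmul : ∑ j, μ j * c j ≤ ∑ j ∈ S, μ j :=
        sum_mul_le_top μ c S hScard hk htop hμnn hc0 hc1 (by rw [hcsum]; exact hmkR)
      have hS1 : ∑ j ∈ S, (μ j + lam)⁻¹ * μ j ≤ (k:ℝ) := by
        calc ∑ j ∈ S, (μ j + lam)⁻¹ * μ j ≤ ∑ _j ∈ S, (1:ℝ) :=
            Finset.sum_le_sum fun j _ => hterm1 j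
          _ = (k:ℝ) := by rw [Finset.sum_const, hScard, nsmul_eq_mul, mul_one]
      have hterm2 : ∀ j, (μ j + lam)⁻¹ * μ j ≤ lam⁻¹ * μ j := by
        intro j
        refine mul_le_mul_of_nonneg_right ?_ (hμnn j)
        refine inv_anti₀ hlampos ?_
        linarith [hμnn j]
      have hcompl : ∑ j ∈ Sᶜ, μ j = ∑ j, μ j - ∑ j ∈ S, μ j := by
        linarith [Finset.sum_add_sum_compl S μ]
      have htail : ∑ j, μ j - ∑ j ∈ S, μ j ≤ (k:ℝ) * lam := by
        have h : frobSq (A - Ak) = (k:ℝ) * lam := by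
          rw [hlam]; field_simp
        linarith [hEY, hmul]
      have hS2 : ∑ j ∈ Sᶜ, (μ j + lam)⁻¹ * μ j ≤ (k:ℝ) := by
        calc ∑ j ∈ Sᶜ, (μ j + lam)⁻¹ * μ j ≤ ∑ j ∈ Sᶜ, lam⁻¹ * μ j :=
            Finset.sum_le_sum fun j _ => hterm2 j
          _ = lam⁻¹ * ∑ j ∈ Sᶜ, μ j := (Finset.mul_sum _ _ _).symm
          _ ≤ lam⁻¹ * ((k:ℝ) * lam) := by
              refine mul_le_mul_of_nonneg_left ?_ (le_of_lt (inv_pos.mpr hlampos))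
              rw [hcompl]; exact htail
          _ = (k:ℝ) := by field_simp
      calc ∑ j, (μ j + lam)⁻¹ * μ j
          = ∑ j ∈ S, (μ j + lam)⁻¹ * μ j + ∑ j ∈ Sᶜ, (μ j + lam)⁻¹ * μ j :=
            (Finset.sum_add_sum_compl S _).symm
        _ ≤ (k:ℝ) + (k:ℝ) := add_le_add hS1 hS2
        _ = 2 * (k:ℝ) := by ring
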